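/- If F is semi-regular, then the Alexandrov duplicate of F is semi-regular. -/

import Mathlib

open TopologicalSpace Set Topology

/-- A space is semi-regular if its regular-open sets form a base of the topology. -/
def SemiRegular (X : Type*) [TopologicalSpace X] : Prop :=
  TopologicalSpace.IsTopologicalBasis {U : Set X | U = interior (closure U)}

/-- The topology of the Alexandrov duplicate of `F`, on the point set `F × Bool`,
where `(x, false)` plays the role of `(x,1)` (the open copy) and `(x, true)` of
`(x,2)`. -/
def dupTopology (F : Type*) [TopologicalSpace F] : TopologicalSpace (F × Bool) :=
  TopologicalSpace.generateFrom
    ({S | ∃ x : F, S = {(x, false)}} ∪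
     {S | ∃ (U Y : Set F), IsOpen U ∧ Y.Finite ∧
        S = (U ×ˢ ({true} : Set Bool)) ∪ ((U \ Y) ×ˢ ({false} : Set Bool))})

namespace AlexDup

variable {F : Type*} [TopologicalSpace F]

/-- Basic open sets of the duplicate. -/
def W (U Y : Set F) : Set (F × Bool) :=
  (U ×ˢ ({true} : Set Bool)) ∪ ((U \ Y) ×ˢ ({false} : Set Bool))

def gens (F : Type*) [TopologicalSpace F] : Set (Set (F × Bool)) :=
  {S | ∃ x : F, S = {(x, false)}} ∪
  {S | ∃ (U Y : Set F), IsOpen U ∧ Y.Finite ∧ S = W U Y}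

lemma dupTopology_eq : dupTopology F = TopologicalSpace.generateFrom (gens F) := rfl

lemma mem_W_true {U Y : Set F} {z : F} : (z, true) ∈ W U Y ↔ z ∈ U := by
  simp [W]

lemma mem_W_false {U Y : Set F} {z : F} : (z, false) ∈ W U Y ↔ z ∈ U \ Y := by
  simp [W]

lemma isOpen_W {U : Set F} (hU : IsOpen U) {Y : Set F} (hY : Y.Finite) :
    IsOpen[dupTopology F] (W U Y) :=
  TopologicalSpace.GenerateOpen.basic _ (Or.inr ⟨U, Y, hU, hY, rfl⟩)

lemma isOpen_singleton_false (x : F) :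
    IsOpen[dupTopology F] ({(x, false)} : Set (F × Bool)) :=
  TopologicalSpace.GenerateOpen.basic _ (Or.inl ⟨x, rfl⟩)

lemma W_subset_W {U U' Y Y' : Set F} (hU : U ⊆ U') (hY : Y' ⊆ Y) :
    W U Y ⊆ W U' Y' := by
  rintro ⟨a, b⟩ hab
  cases b
  · rw [mem_W_false] at hab ⊢
    exact ⟨hU hab.1, fun hc => hab.2 (hY hc)⟩
  · rw [mem_W_true] at hab ⊢
    exact hU hab

lemma exists_W_subset_sInter {f : Set (Set (F × Bool))} (hf : f.Finite) :
    ∀ (_ : f ⊆ gens F) (z : F) (_ : (z, true) ∈ ⋂₀ f),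
      ∃ U Y, IsOpen U ∧ Y.Finite ∧ z ∈ U ∧ W U Y ⊆ ⋂₀ f := by
  refine Set.Finite.induction_on
    (motive := fun f _ => ∀ (_ : f ⊆ gens F) (z : F) (_ : (z, true) ∈ ⋂₀ f),
      ∃ U Y, IsOpen U ∧ Y.Finite ∧ z ∈ U ∧ W U Y ⊆ ⋂₀ f) f hf ?_ ?_
  · intro _ z _
    exact ⟨univ, ∅, isOpen_univ, finite_empty, mem_univ z, by simp⟩
  · intro t f hts hfin ih hsub z hz
    rw [Set.sInter_insert] at hz
    obtain ⟨hzt, hzf⟩ := hz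
    obtain ⟨U, Y, hU, hY, hzU, hWf⟩ := ih (fun s hs => hsub (Set.mem_insert_of_mem _ hs)) z hzf
    have ht : t ∈ gens F := hsub (Set.mem_insert _ _)
    rcases ht with ⟨x, rfl⟩ | ⟨V, Z, hV, hZ, rfl⟩
    · simp at hzt
    · rw [mem_W_true] at hzt
      refine ⟨U ∩ V, Y ∪ Z, hU.inter hV, hY.union hZ, ⟨hzU, hzt⟩, ?_⟩
      rw [Set.sInter_insert]
      exact Set.subset_inter
        ((W_subset_W inter_subset_right subset_union_right))
        ((W_subset_W inter_subset_left subset_union_left).trans hWf)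

lemma exists_W_subset {O : Set (F × Bool)} (hO : IsOpen[dupTopology F] O) {z : F}
    (hz : (z, true) ∈ O) :
    ∃ U Y, IsOpen U ∧ Y.Finite ∧ z ∈ U ∧ W U Y ⊆ O := by
  letI := dupTopology F
  have hb := TopologicalSpace.isTopologicalBasis_of_subbasis (dupTopology_eq (F := F))
  obtain ⟨v, hv, hzv, hvO⟩ := hb.exists_subset_of_mem_open hz hO
  obtain ⟨f, ⟨hfin, hfsub⟩, rfl⟩ := hv
  obtain ⟨U, Y, hU, hY, hzU, hW⟩ := exists_W_subset_sInter hfin hfsub z hzv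
  exact ⟨U, Y, hU, hY, hzU, hW.trans hvO⟩

lemma singleton_false_regularOpen (x : F) :
    ({(x, false)} : Set (F × Bool)) =
      @interior _ (dupTopology F) (@closure _ (dupTopology F) {(x, false)}) := by
  letI := dupTopology F
  have hcompl : ({(x, false)} : Set (F × Bool))ᶜ = W univ {x} := by
    ext ⟨a, b⟩
    cases b <;> simp [W, eq_comm]
  have hclosed : IsClosed ({(x, false)} : Set (F × Bool)) := by
    rw [← isOpen_compl_iff, hcompl]
    exact isOpen_W isOpen_univ (finite_singleton x)
  rw [hclosed.closure_eq, (isOpen_singleton_false x).interior_eq]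

lemma W_regularOpen {R : Set F} (hR : R = interior (closure R)) {Y : Set F}
    (hY : Y.Finite) :
    W R Y = @interior _ (dupTopology F) (@closure _ (dupTopology F) (W R Y)) := by
  letI := dupTopology F
  have hRopen : IsOpen R := hR ▸ isOpen_interior
  apply Subset.antisymm
  · exact interior_maximal (subset_closure.trans (closure_mono subset_rfl))
      (isOpen_W hRopen hY) |>.trans
      (interior_mono (closure_mono subset_rfl)) |>.trans subset_rfl
  · rintro ⟨y, b⟩ hp
    cases b
    · -- false copy: singleton is open, so a closure point must be in the set
      have hcl : ((y, false) : F × Bool) ∈ closure (W R Y) := interior_subset hp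
      have := mem_closure_iff.mp hcl _ (isOpen_singleton_false y) rfl
      obtain ⟨q, hq1, hq2⟩ := this
      rw [Set.mem_singleton_iff] at hq1
      rwa [hq1] at hq2
    · obtain ⟨O, hOsub, hOopen, hpO⟩ := mem_interior.mp hp
      obtain ⟨V, Z, hV, hZ, hyV, hWVO⟩ := exists_W_subset hOopen hpO
      have hVcl : V ⊆ closure R := by
        intro v hv
        by_contra hvc
        have hG : IsOpen ((closure R)ᶜ) := isClosed_closure.isOpen_compl
        have hvW : ((v, true) : F × Bool) ∈ closure (W R Y) :=
          hOsub (hWVO (mem_W_true.mpr hv))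
        obtain ⟨⟨q, c⟩, hq1, hq2⟩ := mem_closure_iff.mp hvW _
          (isOpen_W hG finite_empty) (mem_W_true.mpr hvc)
        cases c
        · rw [mem_W_false] at hq1 hq2
          exact hq1.1 (subset_closure hq2.1)
        · rw [mem_W_true] at hq1 hq2
          exact hq1 (subset_closure hq2)
      have : V ⊆ R := hR ▸ interior_maximal hVcl hV
      exact mem_W_true.mpr (this hyV)

end AlexDup

theorem alexandrov_duplicate_semiRegular
    {F : Type*} [TopologicalSpace F] (h : SemiRegular F) :
    @SemiRegular (F × Bool) (dupTopology F) := by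
  letI := dupTopology F
  show TopologicalSpace.IsTopologicalBasis {U : Set (F × Bool) | U = interior (closure U)}
  apply TopologicalSpace.isTopologicalBasis_of_isOpen_of_nhds
  · intro U hU
    rw [hU]
    exact isOpen_interior
  · rintro ⟨y, b⟩ O hp hO
    cases b
    · exact ⟨{(y, false)}, AlexDup.singleton_false_regularOpen y, rfl,
        Set.singleton_subset_iff.mpr hp⟩
    · obtain ⟨V, Z, hV, hZ, hyV, hWO⟩ := AlexDup.exists_W_subset hO hp
      obtain ⟨R, hRmem, hyR, hRV⟩ := h.exists_subset_of_mem_open hyV hV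
      exact ⟨AlexDup.W R Z, AlexDup.W_regularOpen hRmem hZ,
        AlexDup.mem_W_true.mpr hyR,
        (AlexDup.W_subset_W hRV subset_rfl).trans hWO⟩
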